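/- If T is a ditree in which every vertex has in-degree at least 1, then the open packing number equals the total domination number: ρ°(T) = γ_t(T). -/

import Mathlib

open SimpleGraph

variable {V W : Type*}

/-- The closed out-neighborhood of `v` in the digraph with arc relation `A`. -/
def NplusC (A : V → V → Prop) (v : V) : Set V := insert v {u | A v u}

/-- The closed in-neighborhood of `v`. -/
def NminusC (A : V → V → Prop) (v : V) : Set V := insert v {u | A u v}

/-- The open out-neighborhood of `v`. -/
def NplusO (A : V → V → Prop) (v : V) : Set V := {u | A v u}

/-- The open in-neighborhood of `v`. -/
def NminusO (A : V → V → Prop) (v : V) : Set V := {u | A u v}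

/-- `S` is a dominating set: every vertex is in a closed out-neighborhood of a member of `S`. -/
def IsDomSet (A : V → V → Prop) (S : Set V) : Prop := ∀ u, ∃ v ∈ S, u ∈ NplusC A v

/-- The domination number of a digraph. -/
noncomputable def domNum (V : Type*) [Fintype V] (A : V → V → Prop) : ℕ :=
  sInf {n | ∃ S : Set V, IsDomSet A S ∧ S.ncard = n}

/-- `P` is a packing: closed in-neighborhoods of members are pairwise disjoint. -/
def IsPacking (A : V → V → Prop) (P : Set V) : Prop :=
  P.Pairwise fun x y => Disjoint (NminusC A x) (NminusC A y)

/-- The packing number of a digraph. -/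
noncomputable def packNum (V : Type*) [Fintype V] (A : V → V → Prop) : ℕ :=
  sSup {n | ∃ P : Set V, IsPacking A P ∧ P.ncard = n}

/-- `S` is a total dominating set: every vertex has an in-neighbor in `S`. -/
def IsTotalDomSet (A : V → V → Prop) (S : Set V) : Prop := ∀ u, ∃ v ∈ S, A v u

/-- The total domination number of a digraph. -/
noncomputable def totalDomNum (V : Type*) [Fintype V] (A : V → V → Prop) : ℕ :=
  sInf {n | ∃ S : Set V, IsTotalDomSet A S ∧ S.ncard = n}

/-- `P` is an open packing: open in-neighborhoods of members are pairwise disjoint. -/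
def IsOpenPacking (A : V → V → Prop) (P : Set V) : Prop :=
  P.Pairwise fun x y => Disjoint (NminusO A x) (NminusO A y)

/-- The open packing number of a digraph. -/
noncomputable def openPackNum (V : Type*) [Fintype V] (A : V → V → Prop) : ℕ :=
  sSup {n | ∃ P : Set V, IsOpenPacking A P ∧ P.ncard = n}

/-- The underlying (simple) graph of a digraph. -/
def ugr (A : V → V → Prop) : SimpleGraph V := SimpleGraph.fromRel A

/-- A ditree is a digraph whose underlying graph is a tree. -/
def IsDitree (A : V → V → Prop) : Prop := (ugr A).IsTree

/-- Arc relation of the Cartesian product of two digraphs. -/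
def cartArc (A : V → V → Prop) (B : W → W → Prop) : V × W → V × W → Prop :=
  fun p q => (p.1 = q.1 ∧ B p.2 q.2) ∨ (p.2 = q.2 ∧ A p.1 q.1)

/-- Arc relation of the direct product of two digraphs. -/
def dirArc (A : V → V → Prop) (B : W → W → Prop) : V × W → V × W → Prop :=
  fun p q => A p.1 q.1 ∧ B p.2 q.2

/-- The closed in-neighborhood graph of a digraph: distinct vertices are adjacent iff
their closed in-neighborhoods intersect. -/
def Ncg (A : V → V → Prop) : SimpleGraph V :=
  SimpleGraph.fromRel (fun u v => (NminusC A u ∩ NminusC A v).Nonempty)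

/-- The open in-neighborhood graph of a digraph: distinct vertices are adjacent iff
their open in-neighborhoods intersect. -/
def Nog (A : V → V → Prop) : SimpleGraph V :=
  SimpleGraph.fromRel (fun u v => (NminusO A u ∩ NminusO A v).Nonempty)


section AuxStmt2

open SimpleGraph

variable {V : Type*}

private lemma arc_adj' {A : V → V → Prop} (hirr : ∀ v, ¬ A v v) {u v : V} (h : A u v) :
    (ugr A).Adj u v :=
  (SimpleGraph.fromRel_adj A u v).mpr ⟨fun he => hirr v (he ▸ h), Or.inl h⟩

private lemma aux_path' {A : V → V → Prop} (hT : (ugr A).IsTree) (r : V) {u v : V}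
    (huv : (ugr A).Adj u v) (hle : (ugr A).dist r u ≤ (ugr A).dist r v) :
    ∃ p : (ugr A).Walk r u, p.IsPath ∧ p.length = (ugr A).dist r u ∧ v ∉ p.support := by
  classical
  obtain ⟨p, hp, hlen⟩ := hT.isConnected.exists_path_of_dist r u
  refine ⟨p, hp, hlen, fun hv => ?_⟩
  have h1 : (ugr A).dist r v ≤ (p.takeUntil v hv).length := SimpleGraph.dist_le _
  have h2 : (p.dropUntil v hv).length ≠ 0 := fun h0 => huv.ne' (Walk.eq_of_length_eq_zero h0)
  have h3 : (p.takeUntil v hv).length + (p.dropUntil v hv).length = p.length := by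
    rw [← Walk.length_append, Walk.take_spec]
  have h4 : (ugr A).dist r u ≤ (ugr A).dist r v := hle
  omega

private lemma tree_key' {A : V → V → Prop} (hT : (ugr A).IsTree) (r : V) {u v : V}
    (huv : (ugr A).Adj u v) (hle : (ugr A).dist r u ≤ (ugr A).dist r v) :
    (ugr A).dist r v = (ugr A).dist r u + 1 ∧
      ∀ u', (ugr A).Adj u' v → (ugr A).dist r u' ≤ (ugr A).dist r v → u' = u := by
  obtain ⟨p, hp, hlen, hvs⟩ := aux_path' hT r huv hle
  have hqpath : (p.concat huv).IsPath := by
    rw [← Walk.isPath_reverse_iff, Walk.reverse_concat]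
    exact hp.reverse.cons (by simpa [Walk.support_reverse] using hvs)
  obtain ⟨p₀, -, huniq⟩ := hT.existsUnique_path r v
  obtain ⟨p₂, hp₂, hlen₂⟩ := hT.isConnected.exists_path_of_dist r v
  have he : p.concat huv = p₂ := (huniq _ hqpath).trans (huniq _ hp₂).symm
  have hdist : (ugr A).dist r v = (ugr A).dist r u + 1 := by
    have hl := congrArg Walk.length he
    rw [Walk.length_concat, hlen] at hl
    omega
  refine ⟨hdist, fun u' hu'v hle' => ?_⟩
  obtain ⟨p', hp', hlen', hvs'⟩ := aux_path' hT r hu'v hle'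
  have hq'path : (p'.concat hu'v).IsPath := by
    rw [← Walk.isPath_reverse_iff, Walk.reverse_concat]
    exact hp'.reverse.cons (by simpa [Walk.support_reverse] using hvs')
  have he' : p.concat huv = p'.concat hu'v := (huniq _ hqpath).trans (huniq _ hq'path).symm
  obtain ⟨hv, -⟩ := Walk.concat_inj he'
  exact hv.symm

private lemma leaf_find' {A : V → V → Prop} [Fintype V] (hirr : ∀ v, ¬ A v v)
    (hT : (ugr A).IsTree) (Lft Rgt : Set V) (hR : Rgt.Nonempty)
    (h2 : ∀ v ∈ Rgt, ∃ u ∈ Lft, ∃ u' ∈ Lft, u ≠ u' ∧ A u v ∧ A u' v) :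
    ∃ w ∈ Lft, ∃ v ∈ Rgt, A w v ∧ ∀ v' ∈ Rgt, A w v' → v' = v := by
  by_contra hno
  push_neg at hno
  obtain ⟨v₀, hv₀⟩ := hR
  set G := ugr A with hG
  set d : V → ℕ := fun x => G.dist v₀ x with hd
  set F : Set (V × V) := {p | p.1 ∈ Lft ∧ p.2 ∈ Rgt ∧ A p.1 p.2} with hF
  have hFne : F.Nonempty := by
    obtain ⟨u, hu, -, -, -, hA, -⟩ := h2 v₀ hv₀
    exact ⟨(u, v₀), hu, hv₀, hA⟩
  obtain ⟨⟨u, v⟩, ⟨huL, hvR, hA⟩, hmax⟩ :=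
    Set.exists_max_image F (fun p => d p.1 + d p.2) (Set.toFinite F) hFne
  have hadj : G.Adj u v := arc_adj' hirr hA
  by_cases hle : d u ≤ d v
  · obtain ⟨-, huniq⟩ := tree_key' hT v₀ hadj hle
    obtain ⟨u₁, hu₁, u₂, hu₂, hne, hA₁, hA₂⟩ := h2 v hvR
    obtain ⟨u'', hu''L, hu''ne, hA''⟩ : ∃ u'' ∈ Lft, u'' ≠ u ∧ A u'' v := by
      rcases eq_or_ne u₁ u with rfl | h1
      · exact ⟨u₂, hu₂, fun h => hne h.symm, hA₂⟩
      · exact ⟨u₁, hu₁, h1, hA₁⟩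
    have hgt : ¬ d u'' ≤ d v := fun hle'' => hu''ne (huniq u'' (arc_adj' hirr hA'') hle'')
    have hm := hmax (u'', v) ⟨hu''L, hvR, hA''⟩
    simp only at hm
    omega
  · push_neg at hle
    obtain ⟨-, vuniq⟩ := tree_key' hT v₀ hadj.symm (le_of_lt hle)
    obtain ⟨v', hv'R, hA', hv'ne⟩ := hno u huL v hvR hA
    have hgt : ¬ d v' ≤ d u := fun hle' => hv'ne (vuniq v' (arc_adj' hirr hA').symm hle')
    have hm := hmax (u, v') ⟨huL, hv'R, hA'⟩
    simp only at hm
    omega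

private lemma main_ind' {A : V → V → Prop} [Fintype V] (hirr : ∀ v, ¬ A v v)
    (hT : (ugr A).IsTree) :
    ∀ (n : ℕ) (Lft Rgt : Set V), Lft.ncard ≤ n →
      (∀ v ∈ Rgt, ∃ u ∈ Lft, A u v) →
      (∀ z, z ∉ Lft → ∀ v ∈ Rgt, ∀ v' ∈ Rgt, A z v → A z v' → v = v') →
      ∃ S P : Set V, S ⊆ Lft ∧ P ⊆ Rgt ∧ (∀ v ∈ Rgt, ∃ u ∈ S, A u v) ∧
        IsOpenPacking A P ∧ S.ncard ≤ P.ncard := by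
  intro n
  induction n with
  | zero =>
    intro Lft Rgt hc H1 _
    rcases Set.eq_empty_or_nonempty Rgt with rfl | ⟨v, hv⟩
    · exact ⟨∅, ∅, by simp, by simp, by simp, by simp [IsOpenPacking], le_rfl⟩
    · obtain ⟨u, hu, -⟩ := H1 v hv
      have hpos : 0 < Lft.ncard := (Set.ncard_pos (Set.toFinite _)).mpr ⟨u, hu⟩
      omega
  | succ n ih =>
    intro Lft Rgt hc H1 H2
    rcases Set.eq_empty_or_nonempty Rgt with rfl | hRne
    · exact ⟨∅, ∅, by simp, by simp, by simp, by simp [IsOpenPacking], le_rfl⟩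
    by_cases hcase : ∃ v₀ ∈ Rgt, ∃ u₀, {u ∈ Lft | A u v₀} = {u₀}
    · -- Case 1 : some right vertex with a unique live in-neighbour
      obtain ⟨v₀, hv₀R, u₀, hinn⟩ := hcase
      have hu₀ : u₀ ∈ Lft ∧ A u₀ v₀ := by
        have : u₀ ∈ {u ∈ Lft | A u v₀} := by rw [hinn]; exact rfl
        exact this
      set L' : Set V := Lft \ {u₀} with hL'
      set R' : Set V := {v ∈ Rgt | ¬ A u₀ v} with hR'
      have hcard' : L'.ncard ≤ n := by
        have h := Set.ncard_diff_singleton_lt_of_mem hu₀.1 (Set.toFinite _)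
        rw [← hL'] at h
        omega
      have H1' : ∀ v ∈ R', ∃ u ∈ L', A u v := by
        rintro v ⟨hvR, hnv⟩
        obtain ⟨u, huL, hAu⟩ := H1 v hvR
        refine ⟨u, ⟨huL, fun he => hnv ?_⟩, hAu⟩
        rw [Set.mem_singleton_iff] at he
        exact he ▸ hAu
      have H2' : ∀ z, z ∉ L' → ∀ v ∈ R', ∀ v' ∈ R', A z v → A z v' → v = v' := by
        intro z hz v hv v' hv' hAv hAv'
        by_cases hzL : z ∈ Lft
        · have hz0 : z = u₀ := by
            by_contra hne
            exact hz ⟨hzL, hne⟩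
          exact absurd (hz0 ▸ hAv) hv.2
        · exact H2 z hzL v hv.1 v' hv'.1 hAv hAv'
      obtain ⟨S', P', hS'sub, hP'sub, hcov', hpack', hle'⟩ := ih L' R' hcard' H1' H2'
      have hv₀notR' : v₀ ∉ R' := fun h => h.2 hu₀.2
      have hv₀notP' : v₀ ∉ P' := fun h => hv₀notR' (hP'sub h)
      refine ⟨insert u₀ S', insert v₀ P', ?_, ?_, ?_, ?_, ?_⟩
      · exact Set.insert_subset hu₀.1 (hS'sub.trans Set.diff_subset)
      · exact Set.insert_subset hv₀R (hP'sub.trans (Set.sep_subset _ _))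
      · intro v hv
        by_cases hA0 : A u₀ v
        · exact ⟨u₀, Set.mem_insert _ _, hA0⟩
        · obtain ⟨u, hu, hAu⟩ := hcov' v ⟨hv, hA0⟩
          exact ⟨u, Set.mem_insert_of_mem _ hu, hAu⟩
      · have hsymm : Symmetric fun x y => Disjoint (NminusO A x) (NminusO A y) :=
          fun x y h => h.symm
        haveI : Std.Symm fun x y => Disjoint (NminusO A x) (NminusO A y) := ⟨fun a b h => hsymm h⟩
        rw [IsOpenPacking, Set.pairwise_insert_of_symm]
        refine ⟨hpack', fun y hy _ => ?_⟩
        rw [Set.disjoint_left]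
        intro z hzv₀ hzy
        have hzRy : A z y := hzy
        have hzRv : A z v₀ := hzv₀
        by_cases hzL : z ∈ Lft
        · have : z ∈ {u ∈ Lft | A u v₀} := ⟨hzL, hzRv⟩
          rw [hinn, Set.mem_singleton_iff] at this
          exact (hP'sub hy).2 (this ▸ hzRy)
        · exact hv₀notP' ((H2 z hzL v₀ hv₀R y ((hP'sub hy).1) hzRv hzRy) ▸ hy)
      · have h1 : (insert u₀ S').ncard ≤ S'.ncard + 1 := Set.ncard_insert_le _ _
        have h2 : (insert v₀ P').ncard = P'.ncard + 1 :=
          Set.ncard_insert_of_notMem hv₀notP' (Set.toFinite _)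
        omega
    · -- Case 2 : every right vertex has ≥ 2 live in-neighbours
      push_neg at hcase
      have h2 : ∀ v ∈ Rgt, ∃ u ∈ Lft, ∃ u' ∈ Lft, u ≠ u' ∧ A u v ∧ A u' v := by
        intro v hv
        obtain ⟨u, huL, hAu⟩ := H1 v hv
        by_contra hcon
        push_neg at hcon
        apply hcase v hv u
        ext x
        simp only [Set.mem_setOf_eq, Set.mem_singleton_iff]
        constructor
        · rintro ⟨hxL, hAx⟩
          by_contra hxu
          exact (hcon u huL x hxL (Ne.symm hxu)) hAu hAx
        · rintro rfl; exact ⟨huL, hAu⟩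
      obtain ⟨w, hwL, vs, hvsR, hAw, hwuniq⟩ := leaf_find' hirr hT Lft Rgt hRne h2
      set L' : Set V := Lft \ {w} with hL'
      have hcard' : L'.ncard ≤ n := by
        have h := Set.ncard_diff_singleton_lt_of_mem hwL (Set.toFinite _)
        rw [← hL'] at h
        omega
      have H1' : ∀ v ∈ Rgt, ∃ u ∈ L', A u v := by
        intro v hv
        obtain ⟨u₁, hu₁, u₂, hu₂, hne, hA₁, hA₂⟩ := h2 v hv
        rcases eq_or_ne u₁ w with rfl | h1
        · exact ⟨u₂, ⟨hu₂, fun h => hne (Set.mem_singleton_iff.mp h).symm⟩, hA₂⟩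
        · exact ⟨u₁, ⟨hu₁, h1⟩, hA₁⟩
      have H2' : ∀ z, z ∉ L' → ∀ v ∈ Rgt, ∀ v' ∈ Rgt, A z v → A z v' → v = v' := by
        intro z hz v hv v' hv' hAv hAv'
        by_cases hzL : z ∈ Lft
        · have hzw : z = w := by
            by_contra hne
            exact hz ⟨hzL, hne⟩
          rw [hwuniq v hv (hzw ▸ hAv), hwuniq v' hv' (hzw ▸ hAv')]
        · exact H2 z hzL v hv v' hv' hAv hAv'
      obtain ⟨S', P', hS'sub, hP'sub, hcov', hpack', hle'⟩ := ih L' Rgt hcard' H1' H2'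
      exact ⟨S', P', hS'sub.trans Set.diff_subset, hP'sub, hcov', hpack', hle'⟩

end AuxStmt2

theorem stmt2 {V : Type*} [Fintype V] (A : V → V → Prop)
    (hirr : ∀ v, ¬ A v v) (hT : IsDitree A)
    (hdeg : ∀ v : V, ∃ u, A u v) :
    openPackNum V A = totalDomNum V A := by
  classical
  have hbdd : BddAbove {n | ∃ P : Set V, IsOpenPacking A P ∧ P.ncard = n} := by
    refine ⟨Fintype.card V, fun n hn => ?_⟩
    obtain ⟨P, -, rfl⟩ := hn
    have := Set.ncard_le_ncard (Set.subset_univ P) (Set.toFinite _)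
    simpa [Set.ncard_univ, Nat.card_eq_fintype_card] using this
  have hPne : {n | ∃ P : Set V, IsOpenPacking A P ∧ P.ncard = n}.Nonempty :=
    ⟨0, ∅, by simp [IsOpenPacking], by simp⟩
  have hSne : {n | ∃ S : Set V, IsTotalDomSet A S ∧ S.ncard = n}.Nonempty := by
    refine ⟨(Set.univ : Set V).ncard, Set.univ, fun u => ?_, rfl⟩
    obtain ⟨v, hv⟩ := hdeg u
    exact ⟨v, Set.mem_univ v, hv⟩
  apply le_antisymm
  · obtain ⟨P, hP, hPcard⟩ := Nat.sSup_mem hPne hbdd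
    obtain ⟨S, hS, hScard⟩ := Nat.sInf_mem hSne
    choose f hf1 hf2 using fun x : V => hS x
    have hinj : Set.InjOn f P := by
      intro x hx y hy hxy
      by_contra hne
      have hd := hP hx hy hne
      exact (Set.disjoint_left.mp hd (show f x ∈ NminusO A x from hf2 x))
        (show f x ∈ NminusO A y from hxy ▸ hf2 y)
    have hle : P.ncard ≤ S.ncard :=
      Set.ncard_le_ncard_of_injOn f (fun x _ => hf1 x) hinj (Set.toFinite _)
    rw [hPcard, hScard] at hle
    exact hle
  · obtain ⟨S, P, -, -, hcov, hpack, hle⟩ := main_ind' hirr hT (Fintype.card V)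
      Set.univ Set.univ
      (by simp [Set.ncard_univ, Nat.card_eq_fintype_card])
      (fun v _ => by obtain ⟨u, hu⟩ := hdeg v; exact ⟨u, Set.mem_univ u, hu⟩)
      (fun z hz => absurd (Set.mem_univ z) hz)
    have h1 : totalDomNum V A ≤ S.ncard := by
      refine Nat.sInf_le ⟨S, fun u => ?_, rfl⟩
      obtain ⟨v, hv, hA⟩ := hcov u (Set.mem_univ u)
      exact ⟨v, hv, hA⟩
    have h2 : P.ncard ≤ openPackNum V A := le_csSup hbdd ⟨P, hpack, rfl⟩
    omega
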